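/- Fix ε > 0, H > 0, constants 0 < c_m ≤ c_M, μ₁ > 0 and V > 0. (1) There exists δ > 0 depending only on ε, H, c_m, c_M, μ₁, V — in particular not on the number N of layers nor on the partition — with the following property: for every N ≥ 1, every partition 0 = h₋₁ < h₀ < ⋯ < h_N = H, and every piecewise constant diffusion coefficient c on [0,H] with c ≡ c_{j+1} ∈ [c_m, c_M] on (h_j, h_{j+1}) for j = −1,…,N−1 and total variation Σ_{j=0}^{N−1} |c_{j+1} − c_j| ≤ V, every μ ≥ μ₁ and λ ≥ (c_M + ε) μ², and every normalized reduced eigenfunction u for (c, μ, λ), one has u(y)² + u'(y)² ≥ δ² for all y ∈ [0,H]. (2) Moreover, for every interval (a,b) ⊆ (0,H) there exist d > 0 and λ₀ > 0, depending only on ε, H, c_m, c_M, μ₁, V and b − a, such that ∫_a^b u(y)² c(y)⁻¹ dy ≥ d whenever in addition λ > λ₀. -/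

import Mathlib

open Set MeasureTheory Filter Topology
set_option maxHeartbeats 2000000

/-- `u` (with derivative `u'`) is a reduced eigenfunction for `(c, μ, lam)` on `[0,H]`. -/
def ReducedEigenfunction (H : ℝ) (c : ℝ → ℝ) (μ lam : ℝ) (u u' : ℝ → ℝ) : Prop :=
  (∀ y ∈ Set.Icc (0:ℝ) H, HasDerivWithinAt u (u' y) (Set.Icc (0:ℝ) H) y) ∧
  ContinuousOn u' (Set.Icc (0:ℝ) H) ∧
  (∀ y ∈ Set.Icc (0:ℝ) H, u' y = u' 0 - ∫ t in (0:ℝ)..y, (lam / c t - μ ^ 2) * u t) ∧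
  (∃ y ∈ Set.Icc (0:ℝ) H, u y ≠ 0) ∧
  u 0 = 0 ∧ u H = 0

/-- `c` is a piecewise constant diffusion coefficient on `[0,H]` built on the
partition `p 0 = 0 < p 1 < ⋯ < p (N+1) = H` with values `v j ∈ [c_m, c_M]` on the
`N+1` open layers, and with total variation `∑_{j<N} |v (j+1) - v j| ≤ V`. -/
def PiecewiseConstCoeff (H c_m c_M V : ℝ) (N : ℕ) (p v : ℕ → ℝ) (c : ℝ → ℝ) : Prop :=
  1 ≤ N ∧ p 0 = 0 ∧ p (N + 1) = H ∧
  (∀ j ≤ N, p j < p (j + 1)) ∧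
  (∀ j ≤ N, c_m ≤ v j ∧ v j ≤ c_M) ∧
  (∑ j ∈ Finset.range N, |v (j + 1) - v j|) ≤ V ∧
  Measurable c ∧
  (∀ y ∈ Set.Icc (0:ℝ) H, c_m ≤ c y ∧ c y ≤ c_M) ∧
  (∀ j ≤ N, ∀ y ∈ Set.Ioo (p j) (p (j + 1)), c y = v j)

-- helper 1: partition covering
lemma layer_cover {N : ℕ} {p : ℕ → ℝ} {H y : ℝ} (hp0 : p 0 = 0) (hpN : p (N+1) = H)
    (hmono : ∀ j ≤ N, p j < p (j+1)) (hy : y ∈ Icc (0:ℝ) H) :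
    ∃ j ≤ N, y ∈ Icc (p j) (p (j+1)) := by
  classical
  set P : ℕ → Prop := fun i => p i ≤ y with hP
  have hP0 : P 0 := by simp [hP, hp0, hy.1]
  refine ⟨Nat.findGreatest P N, Nat.findGreatest_le N, ?_, ?_⟩
  · rcases Nat.eq_zero_or_pos (Nat.findGreatest P N) with h0 | hpos
    · rw [h0]; simpa [hP, hp0] using hy.1
    · exact Nat.findGreatest_of_ne_zero rfl (Nat.pos_iff_ne_zero.mp hpos)
  · rcases Nat.lt_or_ge (Nat.findGreatest P N) N with hlt | hge
    · have := Nat.findGreatest_is_greatest (P := P) (k := Nat.findGreatest P N + 1)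
        (Nat.lt_succ_self _) hlt
      exact le_of_not_ge this
    · have : Nat.findGreatest P N = N := le_antisymm (Nat.findGreatest_le N) hge
      rw [this, hpN]; exact hy.2

-- helper 2: partition monotone
lemma p_mono {N : ℕ} {p : ℕ → ℝ} (hmono : ∀ j ≤ N, p j < p (j+1)) :
    ∀ i j, i ≤ j → j ≤ N + 1 → p i ≤ p j := by
  intro i j hij hjN
  induction j with
  | zero => simp [Nat.le_zero.mp hij]
  | succ k ih =>
    rcases Nat.eq_or_lt_of_le hij with rfl | h
    · rfl
    · exact le_trans (ih (Nat.lt_succ_iff.mp h) (le_trans (Nat.le_succ k) hjN))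
        (hmono k (Nat.succ_le_succ_iff.mp hjN)).le

-- helper 3: constancy extension
lemma const_on_Icc_of_Ioo {A B C : ℝ} {φ : ℝ → ℝ} (hAB : A < B)
    (hcont : ContinuousOn φ (Icc A B)) (hIoo : ∀ x ∈ Ioo A B, φ x = C) :
    ∀ x ∈ Icc A B, φ x = C := by
  intro x hx
  rcases eq_or_lt_of_le hx.1 with rfl | hlt
  · have hne : (𝓝[Ioo A B] A).NeBot := by
      rw [← mem_closure_iff_nhdsWithin_neBot, closure_Ioo hAB.ne]
      exact ⟨le_refl A, hAB.le⟩
    have h1 : Tendsto φ (𝓝[Ioo A B] A) (𝓝 (φ A)) :=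
      (hcont.continuousWithinAt hx).mono Ioo_subset_Icc_self
    have h2 : Tendsto φ (𝓝[Ioo A B] A) (𝓝 C) := by
      refine Tendsto.congr' ?_ tendsto_const_nhds
      filter_upwards [self_mem_nhdsWithin] with z hz using (hIoo z hz).symm
    exact tendsto_nhds_unique h1 h2
  rcases eq_or_lt_of_le hx.2 with rfl | hlt2
  · have hne : (𝓝[Ioo A x] x).NeBot := by
      rw [← mem_closure_iff_nhdsWithin_neBot, closure_Ioo hAB.ne]
      exact ⟨hAB.le, le_refl x⟩
    have h1 : Tendsto φ (𝓝[Ioo A x] x) (𝓝 (φ x)) :=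
      (hcont.continuousWithinAt hx).mono Ioo_subset_Icc_self
    have h2 : Tendsto φ (𝓝[Ioo A x] x) (𝓝 C) := by
      refine Tendsto.congr' ?_ tendsto_const_nhds
      filter_upwards [self_mem_nhdsWithin] with z hz using (hIoo z hz).symm
    exact tendsto_nhds_unique h1 h2
  · exact hIoo x ⟨hlt, hlt2⟩

-- helper 4: constant on Ioo from zero derivative
lemma const_of_hasDerivAt_zero {A B : ℝ} {φ : ℝ → ℝ}
    (h : ∀ x ∈ Ioo A B, HasDerivAt φ 0 x) :
    ∀ x ∈ Ioo A B, ∀ y ∈ Ioo A B, φ x = φ y := by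
  have key : ∀ x ∈ Ioo A B, ∀ y ∈ Ioo A B, x ≤ y → φ y = φ x := by
    intro x hx y hy hxy
    have hsub : Icc x y ⊆ Ioo A B := fun z hz => ⟨lt_of_lt_of_le hx.1 hz.1, lt_of_le_of_lt hz.2 hy.2⟩
    have hcont : ContinuousOn φ (Icc x y) := fun z hz =>
      ((h z (hsub hz)).continuousAt).continuousWithinAt
    have hderiv : ∀ z ∈ Ico x y, HasDerivWithinAt φ 0 (Ici z) z := fun z hz =>
      (h z (hsub ⟨hz.1, hz.2.le⟩)).hasDerivWithinAt
    exact constant_of_has_deriv_right_zero hcont hderiv y ⟨hxy, le_refl y⟩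
  intro x hx y hy
  rcases le_total x y with hxy | hyx
  · exact (key x hx y hy hxy).symm
  · exact key y hy x hx hyx


lemma q_facts {ε c_m c_M μ₁ μ lam w : ℝ} (hε : 0 < ε) (hcm : 0 < c_m) (hcmM : c_m ≤ c_M)
    (hμ₁ : 0 < μ₁) (hμ : μ₁ ≤ μ) (hlam : (c_M + ε) * μ ^ 2 ≤ lam)
    (hw1 : c_m ≤ w) (hw2 : w ≤ c_M) :
    0 < lam ∧
    lam * ε / (c_M * (c_M + ε)) ≤ lam / w - μ ^ 2 ∧
    lam / w - μ ^ 2 ≤ lam / c_m ∧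
    ε * μ₁ ^ 2 / c_M ≤ lam / w - μ ^ 2 := by
  have hcM : 0 < c_M := lt_of_lt_of_le hcm hcmM
  have hw0 : 0 < w := lt_of_lt_of_le hcm hw1
  have hμ0 : 0 < μ := lt_of_lt_of_le hμ₁ hμ
  have hμsq : μ₁ ^ 2 ≤ μ ^ 2 := by nlinarith
  have hlam0 : 0 < lam := lt_of_lt_of_le (by positivity) hlam
  have h1 : lam / c_M ≤ lam / w := div_le_div_of_nonneg_left hlam0.le hw0 hw2
  refine ⟨hlam0, ?_, ?_, ?_⟩
  · -- lam ε / (c_M (c_M+ε)) ≤ lam/w - μ²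
    have hμle : μ ^ 2 ≤ lam / (c_M + ε) := by
      rw [le_div_iff₀ (by positivity)]; linarith [hlam]
    have key : lam * ε / (c_M * (c_M + ε)) = lam / c_M - lam / (c_M + ε) := by
      field_simp; ring
    rw [key]; linarith
  · have : 0 ≤ μ ^ 2 := sq_nonneg μ
    have h2 : lam / w ≤ lam / c_m := div_le_div_of_nonneg_left hlam0.le hcm hw1
    linarith
  · -- ε μ₁²/c_M ≤ lam/w - μ²
    have h3 : (c_M + ε) * μ ^ 2 / c_M ≤ lam / c_M := by gcongr
    have h4 : (c_M + ε) * μ ^ 2 / c_M - μ ^ 2 = ε * μ ^ 2 / c_M := by field_simp; ring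
    have h5 : ε * μ₁ ^ 2 / c_M ≤ ε * μ ^ 2 / c_M := by
      have : μ₁ ^ 2 ≤ μ ^ 2 := by nlinarith
      gcongr
    linarith


lemma jump_alg {ε c_m c_M lam A Bu q1 q2 F1 F2 t : ℝ}
    (hε : 0 < ε) (hcm : 0 < c_m) (hcM : 0 < c_M) (hlam : 0 < lam)
    (hA : 0 ≤ A) (hB : 0 ≤ Bu) (hq1 : 0 < q1) (hq2 : 0 < q2)
    (hF1 : A / q1 + Bu = F1) (hF2 : A / q2 + Bu = F2) (ht : 0 ≤ t)
    (hd : |q1 - q2| ≤ lam * t / c_m ^ 2)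
    (hq2lo : lam * ε / (c_M * (c_M + ε)) ≤ q2) :
    F2 ≤ F1 * (1 + (c_M * (c_M + ε) / (ε * c_m ^ 2)) * t) := by
  set K : ℝ := c_M * (c_M + ε) / (ε * c_m ^ 2) with hK
  have hK0 : 0 < K := by positivity
  have hqloK : lam * ε / (c_M * (c_M + ε)) * K = lam / c_m ^ 2 := by
    rw [hK]
    field_simp
  have hq2K : lam / c_m ^ 2 ≤ q2 * K := by
    rw [← hqloK]
    exact mul_le_mul_of_nonneg_right hq2lo hK0.le
  have key : F2 - F1 = (A / q1) * ((q1 - q2) / q2) := by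
    rw [← hF1, ← hF2]
    field_simp
    ring
  have b1 : (q1 - q2) / q2 ≤ K * t := by
    rw [div_le_iff₀ hq2]
    calc q1 - q2 ≤ |q1 - q2| := le_abs_self _
      _ ≤ lam * t / c_m ^ 2 := hd
      _ = (lam / c_m ^ 2) * t := by ring
      _ ≤ (q2 * K) * t := mul_le_mul_of_nonneg_right hq2K ht
      _ = K * t * q2 := by ring
  have hAq : 0 ≤ A / q1 := div_nonneg hA hq1.le
  have h1 : A / q1 ≤ F1 := by linarith
  nlinarith [mul_le_mul_of_nonneg_left b1 hAq, mul_le_mul_of_nonneg_right h1 (mul_nonneg hK0.le ht)]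

lemma qdiff_bound {lam μ v1 v2 c_m : ℝ} (hcm : 0 < c_m) (h1 : c_m ≤ v1) (h2 : c_m ≤ v2)
    (hlam : 0 < lam) :
    |(lam / v1 - μ ^ 2) - (lam / v2 - μ ^ 2)| ≤ lam * |v2 - v1| / c_m ^ 2 := by
  have hv1 : 0 < v1 := lt_of_lt_of_le hcm h1
  have hv2 : 0 < v2 := lt_of_lt_of_le hcm h2
  have e : (lam / v1 - μ ^ 2) - (lam / v2 - μ ^ 2) = lam * (v2 - v1) / (v1 * v2) := by
    field_simp
    ring
  rw [e, abs_div, abs_mul, abs_of_pos hlam, abs_of_pos (mul_pos hv1 hv2)]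
  apply div_le_div_of_nonneg_left (by positivity) (by positivity)
  nlinarith

lemma chain_bound {K V : ℝ} {N : ℕ} {F t : ℕ → ℝ}
    (hK : 0 < K) (hFnn : ∀ j ≤ N, 0 ≤ F j) (htnn : ∀ k, 0 ≤ t k)
    (hsum : (∑ k ∈ Finset.range N, t k) ≤ V)
    (hup : ∀ k, k + 1 ≤ N → F (k+1) ≤ F k * (1 + K * t k))
    (hdown : ∀ k, k + 1 ≤ N → F k ≤ F (k+1) * (1 + K * t k)) :
    ∀ i ≤ N, ∀ j ≤ N, F i ≤ Real.exp (K * V) ^ 2 * F j := by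
  set P : ℕ → ℝ := fun j => ∏ k ∈ Finset.range j, (1 + K * t k) with hP
  have hfac : ∀ k, 1 ≤ 1 + K * t k := fun k => by nlinarith [htnn k, hK.le]
  have honele : ∀ s : Finset ℕ, (1:ℝ) ≤ ∏ k ∈ s, (1 + K * t k) := fun s =>
    calc (1:ℝ) = ∏ k ∈ s, 1 := (Finset.prod_const_one).symm
      _ ≤ ∏ k ∈ s, (1 + K * t k) :=
        Finset.prod_le_prod (fun _ _ => zero_le_one) (fun k _ => hfac k)
  have hP1 : ∀ j, 1 ≤ P j := fun j => honele _
  have hPE : ∀ j ≤ N, P j ≤ Real.exp (K * V) := by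
    intro j hj
    have h1 : P j ≤ P N := by
      show (∏ k ∈ Finset.range j, (1 + K * t k)) ≤ ∏ k ∈ Finset.range N, (1 + K * t k)
      rw [Finset.range_eq_Ico, Finset.range_eq_Ico, ← Finset.prod_Ico_consecutive _ (Nat.zero_le j) hj]
      exact le_mul_of_one_le_right (le_trans zero_le_one (honele _)) (honele _)
    have h2 : P N ≤ ∏ k ∈ Finset.range N, Real.exp (K * t k) := by
      show (∏ k ∈ Finset.range N, (1 + K * t k)) ≤ ∏ k ∈ Finset.range N, Real.exp (K * t k)
      apply Finset.prod_le_prod (fun k _ => by nlinarith [htnn k, hK.le])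
      intro k _
      have := Real.add_one_le_exp (K * t k)
      linarith
    have h3 : (∏ k ∈ Finset.range N, Real.exp (K * t k)) = Real.exp (∑ k ∈ Finset.range N, K * t k) :=
      (Real.exp_sum _ _).symm
    have h4 : Real.exp (∑ k ∈ Finset.range N, K * t k) ≤ Real.exp (K * V) := by
      apply Real.exp_le_exp.mpr
      rw [← Finset.mul_sum]
      exact mul_le_mul_of_nonneg_left hsum hK.le
    calc P j ≤ P N := h1
      _ ≤ _ := h2
      _ = _ := h3
      _ ≤ _ := h4
  have main : ∀ j ≤ N, F j ≤ F 0 * P j ∧ F 0 ≤ F j * P j := by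
    intro j hj
    induction j with
    | zero => simp [hP]
    | succ k ih =>
      have hk : k ≤ N := le_trans (Nat.le_succ k) hj
      obtain ⟨ih1, ih2⟩ := ih hk
      have hPk : 0 ≤ P k := le_trans zero_le_one (hP1 k)
      have hstep : P (k+1) = P k * (1 + K * t k) := by
        show (∏ i ∈ Finset.range (k+1), (1 + K * t i)) = (∏ i ∈ Finset.range k, (1 + K * t i)) * (1 + K * t k)
        exact Finset.prod_range_succ _ _
      constructor
      · calc F (k+1) ≤ F k * (1 + K * t k) := hup k hj
          _ ≤ (F 0 * P k) * (1 + K * t k) :=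
              mul_le_mul_of_nonneg_right ih1 (le_trans zero_le_one (hfac k))
          _ = F 0 * P (k+1) := by rw [hstep]; ring
      · calc F 0 ≤ F k * P k := ih2
          _ ≤ (F (k+1) * (1 + K * t k)) * P k := mul_le_mul_of_nonneg_right (hdown k hj) hPk
          _ = F (k+1) * P (k+1) := by rw [hstep]; ring
  intro i hi j hj
  have hEpos : (0:ℝ) < Real.exp (K * V) := Real.exp_pos _
  calc F i ≤ F 0 * P i := (main i hi).1
    _ ≤ F 0 * Real.exp (K * V) := mul_le_mul_of_nonneg_left (hPE i hi) (hFnn 0 (Nat.zero_le N))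
    _ ≤ (F j * P j) * Real.exp (K * V) := mul_le_mul_of_nonneg_right (main j hj).2 hEpos.le
    _ ≤ (F j * Real.exp (K * V)) * Real.exp (K * V) := by
        apply mul_le_mul_of_nonneg_right _ hEpos.le
        exact mul_le_mul_of_nonneg_left (hPE j hj) (hFnn j hj)
    _ = Real.exp (K * V) ^ 2 * F j := by ring

lemma lower_bound {H c_m c_M Cu E : ℝ} {N : ℕ} {q F : ℕ → ℝ} {p : ℕ → ℝ} {c u u' : ℝ → ℝ}
    (hH : 0 < H) (hcm : 0 < c_m) (hE1 : 1 ≤ E)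
    (hcmeas : Measurable c)
    (hucont : ContinuousOn u (Icc 0 H))
    (hcb : ∀ y ∈ Set.Icc (0:ℝ) H, c_m ≤ c y ∧ c y ≤ c_M)
    (hCu : ∀ t ∈ Icc (0:ℝ) H, |u t| ≤ Cu)
    (hq0 : ∀ j ≤ N, 0 < q j)
    (hcover : ∀ y ∈ Icc (0:ℝ) H, ∃ j ≤ N, y ∈ Icc (p j) (p (j+1)))
    (hFid : ∀ j ≤ N, ∀ y ∈ Icc (p j) (p (j+1)), u' y ^ 2 / q j + u y ^ 2 = F j)
    (hcross : ∀ i ≤ N, ∀ j ≤ N, F i ≤ E ^ 2 * F j)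
    (hnorm : (∫ y in (0:ℝ)..H, (u y) ^ 2 / c y) = 1) :
    ∀ j ≤ N, c_m / (H * E ^ 2) ≤ F j := by
  have hE0 : (0:ℝ) < E := lt_of_lt_of_le zero_lt_one hE1
  -- u² ≤ F on layers
  have husq : ∀ y ∈ Icc (0:ℝ) H, ∃ j ≤ N, u y ^ 2 ≤ F j := by
    intro y hy
    obtain ⟨j, hj, hyj⟩ := hcover y hy
    refine ⟨j, hj, ?_⟩
    have := hFid j hj y hyj
    have h2 : 0 ≤ u' y ^ 2 / q j := div_nonneg (sq_nonneg _) (hq0 j hj).le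
    linarith
  -- max of F
  obtain ⟨j0, hj0mem, hj0max⟩ := Finset.exists_max_image (Finset.range (N+1)) F
    ⟨0, Finset.mem_range.mpr (Nat.succ_pos N)⟩
  have hj0 : j0 ≤ N := Nat.lt_succ_iff.mp (Finset.mem_range.mp hj0mem)
  have hFj0nn : 0 ≤ F j0 := by
    obtain ⟨j, hj, hle⟩ := husq 0 ⟨le_refl _, hH.le⟩
    exact le_trans (le_trans (sq_nonneg _) hle)
      (hj0max j (Finset.mem_range.mpr (Nat.lt_succ_iff.mpr hj)))
  -- integrability of u²/c
  have hint : IntervalIntegrable (fun y => u y ^ 2 / c y) volume 0 H := by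
    rw [intervalIntegrable_iff_integrableOn_Ioc_of_le hH.le]
    have hmeas : AEStronglyMeasurable (fun y => u y ^ 2 / c y)
        (volume.restrict (Ioc 0 H)) := by
      have h1 : AEStronglyMeasurable (fun y => u y ^ 2) (volume.restrict (Ioc 0 H)) :=
        ((hucont.mono Ioc_subset_Icc_self).pow 2).aestronglyMeasurable measurableSet_Ioc
      have h2 : AEStronglyMeasurable (fun y => (c y)⁻¹) (volume.restrict (Ioc 0 H)) :=
        (hcmeas.inv).aestronglyMeasurable
      simpa [div_eq_mul_inv, Pi.mul_def] using h1.mul h2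
    have hCu0 : 0 ≤ Cu := le_trans (abs_nonneg _) (hCu 0 ⟨le_refl _, hH.le⟩)
    refine Integrable.mono' (integrable_const (Cu ^ 2 / c_m)) hmeas ?_
    rw [ae_restrict_iff' measurableSet_Ioc]
    filter_upwards with t ht
    have htI : t ∈ Icc (0:ℝ) H := Ioc_subset_Icc_self ht
    have hct : 0 < c t := lt_of_lt_of_le hcm (hcb t htI).1
    have h1 : u t ^ 2 ≤ Cu ^ 2 := by
      have := hCu t htI
      nlinarith [abs_nonneg (u t), sq_abs (u t)]
    rw [Real.norm_eq_abs, abs_of_nonneg (div_nonneg (sq_nonneg _) hct.le)]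
    calc u t ^ 2 / c t ≤ Cu ^ 2 / c t := by gcongr
      _ ≤ Cu ^ 2 / c_m := by gcongr; exact (hcb t htI).1
  -- pointwise bound
  have hpt : ∀ y ∈ Icc (0:ℝ) H, u y ^ 2 / c y ≤ F j0 / c_m := by
    intro y hy
    obtain ⟨j, hj, hle⟩ := husq y hy
    have h2 : F j ≤ F j0 := hj0max j (Finset.mem_range.mpr (Nat.lt_succ_iff.mpr hj))
    have hct : 0 < c y := lt_of_lt_of_le hcm (hcb y hy).1
    calc u y ^ 2 / c y ≤ F j0 / c y := by gcongr; linarith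
      _ ≤ F j0 / c_m := by gcongr; exact (hcb y hy).1
  -- integral comparison
  have hcomp : (1:ℝ) ≤ H * (F j0 / c_m) := by
    have := intervalIntegral.integral_mono_on hH.le hint
      (intervalIntegrable_const (c := F j0 / c_m)) hpt
    rw [hnorm, intervalIntegral.integral_const, smul_eq_mul, sub_zero] at this
    exact this
  have hFj0 : c_m / H ≤ F j0 := by
    rw [div_le_iff₀ hH]
    have h2 : c_m ≤ c_m * (H * (F j0 / c_m)) := by nlinarith
    have h3 : c_m * (H * (F j0 / c_m)) = H * F j0 := by field_simp
    nlinarith [h2, h3]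
  intro j hj
  have := hcross j0 hj0 j hj
  rw [div_le_iff₀ (by positivity)]
  calc c_m ≤ H * F j0 := by
        rw [div_le_iff₀ hH] at hFj0
        linarith
    _ ≤ H * (E ^ 2 * F j) := by
        apply mul_le_mul_of_nonneg_left this hH.le
    _ = F j * (H * E ^ 2) := by ring


section core
variable {ε H c_m c_M μ₁ V : ℝ} {N : ℕ} {p v : ℕ → ℝ} {c u u' : ℝ → ℝ} {μ lam : ℝ}

lemma core
    (hε : 0 < ε) (hH : 0 < H) (hcm : 0 < c_m) (hcmM : c_m ≤ c_M)
    (hμ₁ : 0 < μ₁) (hV : 0 < V)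
    (hPC : PiecewiseConstCoeff H c_m c_M V N p v c)
    (hμ : μ₁ ≤ μ) (hlam : (c_M + ε) * μ ^ 2 ≤ lam)
    (hE : ReducedEigenfunction H c μ lam u u')
    (hnorm : (∫ y in (0:ℝ)..H, (u y) ^ 2 / c y) = 1) :
    ∃ F : ℕ → ℝ,
      (∀ j ≤ N, ∀ y ∈ Icc (p j) (p (j+1)),
          u' y ^ 2 / (lam / v j - μ ^ 2) + u y ^ 2 = F j) ∧
      (∀ i ≤ N, ∀ j ≤ N, F i ≤ Real.exp (c_M*(c_M+ε)/(ε*c_m^2)*V) ^ 2 * F j) ∧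
      (∀ j ≤ N, c_m / (H * Real.exp (c_M*(c_M+ε)/(ε*c_m^2)*V) ^ 2) ≤ F j) ∧
      (∀ j ≤ N, 0 ≤ F j) ∧
      (∀ j ≤ N, ∀ y ∈ Ioo (p j) (p (j+1)),
        HasDerivAt u' (-((lam / v j - μ ^ 2) * u y)) y ∧ HasDerivAt u (u' y) y) := by
  obtain ⟨hN1, hp0, hpN, hpmono, hv, hvar, hcmeas, hcb, hlayer⟩ := hPC
  obtain ⟨hu, hu'c, hueq, hnz, hu0, huH⟩ := hE
  have hcM : 0 < c_M := lt_of_lt_of_le hcm hcmM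
  have hK0 : (0:ℝ) < c_M*(c_M+ε)/(ε*c_m^2) := by positivity
  have hE1 : (1:ℝ) ≤ Real.exp (c_M*(c_M+ε)/(ε*c_m^2)*V) := Real.one_le_exp (by positivity)
  have hlam0 : 0 < lam := (q_facts hε hcm hcmM hμ₁ hμ hlam (le_refl c_m) hcmM).1
  have hucont : ContinuousOn u (Icc 0 H) := fun y hy => (hu y hy).continuousWithinAt
  have hpm : ∀ i j, i ≤ j → j ≤ N + 1 → p i ≤ p j := p_mono hpmono
  have hpIcc : ∀ j ≤ N + 1, p j ∈ Icc (0:ℝ) H := by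
    intro j hj
    constructor
    · rw [← hp0]; exact hpm 0 j (Nat.zero_le j) hj
    · rw [← hpN]; exact hpm j (N+1) hj (le_refl _)
  have hls : ∀ j ≤ N, Icc (p j) (p (j+1)) ⊆ Icc (0:ℝ) H := by
    intro j hj x hx
    exact ⟨le_trans (hpIcc j (le_trans hj (Nat.le_succ N))).1 hx.1,
      le_trans hx.2 (hpIcc (j+1) (Nat.succ_le_succ hj)).2⟩
  set q : ℕ → ℝ := fun j => lam / v j - μ ^ 2 with hq
  have hqf : ∀ j ≤ N, lam * ε / (c_M * (c_M + ε)) ≤ q j ∧ q j ≤ lam / c_m ∧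
      ε * μ₁ ^ 2 / c_M ≤ q j :=
    fun j hj => ⟨(q_facts hε hcm hcmM hμ₁ hμ hlam (hv j hj).1 (hv j hj).2).2.1,
      (q_facts hε hcm hcmM hμ₁ hμ hlam (hv j hj).1 (hv j hj).2).2.2.1,
      (q_facts hε hcm hcmM hμ₁ hμ hlam (hv j hj).1 (hv j hj).2).2.2.2⟩
  have hq0 : ∀ j ≤ N, 0 < q j := fun j hj =>
    lt_of_lt_of_le (by positivity) (hqf j hj).1
  obtain ⟨Cu, hCu⟩ : ∃ Cu, ∀ t ∈ Icc (0:ℝ) H, |u t| ≤ Cu := by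
    obtain ⟨Cu, hCu⟩ := (isCompact_Icc).exists_bound_of_continuousOn hucont
    exact ⟨Cu, fun t ht => by simpa using hCu t ht⟩
  have hCu0 : 0 ≤ Cu := le_trans (abs_nonneg _) (hCu 0 ⟨le_refl _, hH.le⟩)
  -- integrability of the ODE integrand
  have hfint : ∀ s t, s ∈ Icc (0:ℝ) H → t ∈ Icc (0:ℝ) H →
      IntervalIntegrable (fun t => (lam / c t - μ ^ 2) * u t) volume s t := by
    have base : IntervalIntegrable (fun t => (lam / c t - μ ^ 2) * u t) volume 0 H := by
      rw [intervalIntegrable_iff_integrableOn_Ioc_of_le hH.le]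
      have hmeas : AEStronglyMeasurable (fun t => (lam / c t - μ ^ 2) * u t)
          (volume.restrict (Ioc 0 H)) := by
        apply AEStronglyMeasurable.mul
        · exact ((measurable_const.div hcmeas).sub measurable_const).aestronglyMeasurable
        · exact (hucont.mono Ioc_subset_Icc_self).aestronglyMeasurable measurableSet_Ioc
      refine Integrable.mono' (integrable_const ((lam / c_m + μ ^ 2) * Cu)) hmeas ?_
      rw [ae_restrict_iff' measurableSet_Ioc]
      filter_upwards with t ht
      have htI : t ∈ Icc (0:ℝ) H := Ioc_subset_Icc_self ht
      have hc1 := (hcb t htI).1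
      have hct : 0 < c t := lt_of_lt_of_le hcm hc1
      have h1 : |lam / c t - μ ^ 2| ≤ lam / c_m + μ ^ 2 := by
        rw [abs_le]
        constructor
        · have : 0 ≤ lam / c t := by positivity
          nlinarith [div_nonneg hlam0.le hcm.le]
        · have : lam / c t ≤ lam / c_m := div_le_div_of_nonneg_left hlam0.le hcm hc1
          nlinarith [sq_nonneg μ]
      calc ‖(lam / c t - μ ^ 2) * u t‖ = |lam / c t - μ ^ 2| * |u t| := abs_mul _ _
        _ ≤ (lam / c_m + μ ^ 2) * Cu := by
            apply mul_le_mul h1 (hCu t htI) (abs_nonneg _)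
            positivity
    intro s t hs ht
    apply base.mono_set
    rw [uIcc_of_le hH.le]
    exact uIcc_subset_Icc hs ht
  -- derivatives on the open layers
  have hder : ∀ j ≤ N, ∀ y ∈ Ioo (p j) (p (j+1)),
      HasDerivAt u' (-(q j * u y)) y ∧ HasDerivAt u (u' y) y := by
    intro j hj y hy
    set f : ℝ → ℝ := fun t => (lam / c t - μ ^ 2) * u t with hf
    have hsub := hls j hj
    have hcv : ∀ z ∈ Ioo (p j) (p (j+1)), c z = v j := hlayer j hj
    have hyIcc : y ∈ Icc (0:ℝ) H := hsub (Ioo_subset_Icc_self hy)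
    have hopen : IsOpen (Ioo (p j) (p (j+1))) := isOpen_Ioo
    have hnhds : Ioo (p j) (p (j+1)) ∈ 𝓝 y := hopen.mem_nhds hy
    have hIccnhds : Icc (0:ℝ) H ∈ 𝓝 y :=
      mem_of_superset hnhds (subset_trans Ioo_subset_Icc_self hsub)
    have huAt : ContinuousAt u y := (hucont.continuousWithinAt hyIcc).continuousAt hIccnhds
    have huDer : HasDerivAt u (u' y) y := (hu y hyIcc).hasDerivAt hIccnhds
    refine ⟨?_, huDer⟩
    set g : ℝ → ℝ := fun t => (lam / v j - μ ^ 2) * u t with hg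
    have hfg : f =ᶠ[𝓝 y] g := by
      filter_upwards [hnhds] with t ht
      simp only [hf, hg, hcv t ht]
    have hgc : ContinuousAt g y := huAt.const_mul _
    have hmeasat : StronglyMeasurableAtFilter f (𝓝 y) := by
      refine ⟨Ioo (p j) (p (j+1)), hnhds, ?_⟩
      have : ContinuousOn f (Ioo (p j) (p (j+1))) := by
        apply ContinuousOn.congr (f := g)
        · exact ContinuousOn.const_smul
            (hucont.mono (subset_trans Ioo_subset_Icc_self hsub)) ((lam / v j - μ ^ 2) : ℝ)
        · intro t ht; simp only [hf, hg, hcv t ht]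
      exact this.aestronglyMeasurable hopen.measurableSet
    have hcf : ContinuousAt f y := (continuousAt_congr hfg).mpr hgc
    have hFder : HasDerivAt (fun t => ∫ s in (0:ℝ)..t, f s) (f y) y :=
      intervalIntegral.integral_hasDerivAt_right
        (hfint 0 y ⟨le_refl _, hH.le⟩ hyIcc) hmeasat hcf
    have hwder : HasDerivAt (fun t => u' 0 - ∫ s in (0:ℝ)..t, f s) (-(f y)) y :=
      hFder.const_sub (u' 0)
    have hu'w : u' =ᶠ[𝓝 y] (fun t => u' 0 - ∫ s in (0:ℝ)..t, f s) := by
      filter_upwards [hIccnhds] with t ht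
      exact hueq t ht
    have : HasDerivAt u' (-(f y)) y := hu'w.hasDerivAt_iff.mpr hwder
    have hfy : f y = q j * u y := by
      simp only [hf, hcv y hy, hq]
    rwa [hfy] at this
  -- F constant on layers
  set F : ℕ → ℝ := fun j => u' ((p j + p (j+1))/2) ^ 2 / q j + u ((p j + p (j+1))/2) ^ 2
    with hFdef
  have hFid : ∀ j ≤ N, ∀ y ∈ Icc (p j) (p (j+1)), u' y ^ 2 / q j + u y ^ 2 = F j := by
    intro j hj
    have hpp := hpmono j hj
    have hsub := hls j hj
    set φ : ℝ → ℝ := fun y => u' y ^ 2 / q j + u y ^ 2 with hφ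
    have hmid : (p j + p (j+1))/2 ∈ Ioo (p j) (p (j+1)) := ⟨by linarith, by linarith⟩
    have hφder : ∀ y ∈ Ioo (p j) (p (j+1)), HasDerivAt φ 0 y := by
      intro y hy
      obtain ⟨h1, h2⟩ := hder j hj y hy
      have d1 : HasDerivAt (fun t => u' t ^ 2) (2 * u' y ^ 1 * (-(q j * u y))) y := by
        simpa [Pi.pow_def] using h1.pow 2
      have d2 : HasDerivAt (fun t => u t ^ 2) (2 * u y ^ 1 * u' y) y := by
        simpa [Pi.pow_def] using h2.pow 2
      have := (d1.div_const (q j)).add d2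
      have hqne := (hq0 j hj).ne'
      have key : 2 * u' y ^ 1 * -(q j * u y) / q j + 2 * u y ^ 1 * u' y = 0 := by
        field_simp
        ring
      rw [key] at this
      exact this
    have hconst := const_of_hasDerivAt_zero hφder
    have hφcont : ContinuousOn φ (Icc (p j) (p (j+1))) := by
      apply ContinuousOn.add
      · exact ((hu'c.mono hsub).pow 2).div_const (q j)
      · exact (hucont.mono hsub).pow 2
    exact const_on_Icc_of_Ioo hpp hφcont (fun x hx => hconst x hx _ hmid)
  have hFnn : ∀ j ≤ N, 0 ≤ F j := by
    intro j hj
    rw [← hFid j hj (p j) ⟨le_refl _, (hpmono j hj).le⟩]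
    have := (hq0 j hj).le
    positivity
  -- jump inequalities
  have hup : ∀ k, k + 1 ≤ N → F (k+1) ≤ F k * (1 + (c_M*(c_M+ε)/(ε*c_m^2)) * |v (k+1) - v k|) := by
    intro k hk
    have hkN : k ≤ N := le_trans (Nat.le_succ k) hk
    have hx1 : p (k+1) ∈ Icc (p k) (p (k+1)) := ⟨(hpmono k hkN).le, le_refl _⟩
    have hx2 : p (k+1) ∈ Icc (p (k+1)) (p (k+2)) := ⟨le_refl _, (hpmono (k+1) hk).le⟩
    have h1 := hFid k hkN (p (k+1)) hx1
    have h2 := hFid (k+1) hk (p (k+1)) hx2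
    have hd : |q k - q (k+1)| ≤ lam * |v (k+1) - v k| / c_m ^ 2 :=
      qdiff_bound hcm (hv k hkN).1 (hv (k+1) hk).1 hlam0
    exact jump_alg hε hcm hcM hlam0 (sq_nonneg _) (sq_nonneg _) (hq0 k hkN) (hq0 (k+1) hk)
      h1 h2 (abs_nonneg _) hd (hqf (k+1) hk).1
  have hdown : ∀ k, k + 1 ≤ N → F k ≤ F (k+1) * (1 + (c_M*(c_M+ε)/(ε*c_m^2)) * |v (k+1) - v k|) := by
    intro k hk
    have hkN : k ≤ N := le_trans (Nat.le_succ k) hk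
    have hx1 : p (k+1) ∈ Icc (p k) (p (k+1)) := ⟨(hpmono k hkN).le, le_refl _⟩
    have hx2 : p (k+1) ∈ Icc (p (k+1)) (p (k+2)) := ⟨le_refl _, (hpmono (k+1) hk).le⟩
    have h1 := hFid k hkN (p (k+1)) hx1
    have h2 := hFid (k+1) hk (p (k+1)) hx2
    have hd : |q (k+1) - q k| ≤ lam * |v (k+1) - v k| / c_m ^ 2 := by
      rw [abs_sub_comm]
      exact qdiff_bound hcm (hv k hkN).1 (hv (k+1) hk).1 hlam0
    exact jump_alg hε hcm hcM hlam0 (sq_nonneg _) (sq_nonneg _) (hq0 (k+1) hk) (hq0 k hkN)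
      h2 h1 (abs_nonneg _) hd (hqf k hkN).1
  have hcross : ∀ i ≤ N, ∀ j ≤ N,
      F i ≤ Real.exp (c_M*(c_M+ε)/(ε*c_m^2)*V) ^ 2 * F j :=
    chain_bound hK0 hFnn (fun k => abs_nonneg _) hvar hup hdown
  -- lower bound via normalization
  have hcover : ∀ y ∈ Icc (0:ℝ) H, ∃ j ≤ N, y ∈ Icc (p j) (p (j+1)) :=
    fun y hy => layer_cover hp0 hpN hpmono hy
  have hlow : ∀ j ≤ N, c_m / (H * Real.exp (c_M*(c_M+ε)/(ε*c_m^2)*V) ^ 2) ≤ F j :=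
    lower_bound hH hcm hE1 hcmeas hucont hcb hCu hq0 hcover hFid hcross hnorm
  exact ⟨F, hFid, hcross, hlow, hFnn, hder⟩

end core


section
variable {H c_m c_M lam μ : ℝ} {N : ℕ} {p v : ℕ → ℝ} {c u u' : ℝ → ℝ} {q : ℕ → ℝ}

lemma ftc_aux
    (hH : 0 < H) (hcm : 0 < c_m) (hlam0 : 0 < lam)
    (hp0 : p 0 = 0) (hpN : p (N+1) = H)
    (hpmono : ∀ j ≤ N, p j < p (j + 1))
    (hls : ∀ j ≤ N, Icc (p j) (p (j+1)) ⊆ Icc (0:ℝ) H)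
    (hlayer : ∀ j ≤ N, ∀ y ∈ Set.Ioo (p j) (p (j + 1)), c y = v j)
    (hq : ∀ j, q j = lam / v j - μ ^ 2)
    (hcmeas : Measurable c)
    (hcb : ∀ y ∈ Set.Icc (0:ℝ) H, c_m ≤ c y ∧ c y ≤ c_M)
    (hucont : ContinuousOn u (Icc 0 H))
    (hu'c : ContinuousOn u' (Icc 0 H))
    (hder : ∀ j ≤ N, ∀ y ∈ Ioo (p j) (p (j+1)),
      HasDerivAt u' (-(q j * u y)) y ∧ HasDerivAt u (u' y) y)
    (hintall : ∀ s t, s ∈ Icc (0:ℝ) H → t ∈ Icc (0:ℝ) H →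
      IntervalIntegrable (fun y => u' y ^ 2 - (lam / c y - μ ^ 2) * u y ^ 2) volume s t)
    (hcover : ∀ y ∈ Icc (0:ℝ) H, ∃ j ≤ N, y ∈ Icc (p j) (p (j+1))) :
    ∀ s ∈ Icc (0:ℝ) H, ∀ t ∈ Icc (0:ℝ) H, s ≤ t →
      (∫ y in s..t, (u' y ^ 2 - (lam / c y - μ ^ 2) * u y ^ 2))
        = u t * u' t - u s * u' s := by
  set h : ℝ → ℝ := fun y => u' y ^ 2 - (lam / c y - μ ^ 2) * u y ^ 2 with hh
  set g : ℝ → ℝ := fun y => u y * u' y with hg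
  -- FTC within a single closed layer
  have step : ∀ j ≤ N, ∀ s t : ℝ, p j ≤ s → s ≤ t → t ≤ p (j+1) →
      (∫ y in s..t, h y) = g t - g s := by
    intro j hj s t hs hst ht
    have hsubIcc : Icc s t ⊆ Icc (0:ℝ) H := fun z hz =>
      hls j hj ⟨le_trans hs hz.1, le_trans hz.2 ht⟩
    have hcont : ContinuousOn g (Icc s t) :=
      ((hucont.mono hsubIcc).mul (hu'c.mono hsubIcc))
    have hderiv : ∀ x ∈ Ioo s t, HasDerivWithinAt g (h x) (Ioi x) x := by
      intro x hx
      have hxIoo : x ∈ Ioo (p j) (p (j+1)) :=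
        ⟨lt_of_le_of_lt hs hx.1, lt_of_lt_of_le hx.2 ht⟩
      obtain ⟨h1, h2⟩ := hder j hj x hxIoo
      have : HasDerivAt g (u' x * u' x + u x * (-(q j * u x))) x := h2.mul h1
      have he : u' x * u' x + u x * (-(q j * u x)) = h x := by
        simp only [hh, hlayer j hj x hxIoo, hq]
        ring
      rw [he] at this
      exact this.hasDerivWithinAt
    exact intervalIntegral.integral_eq_sub_of_hasDeriv_right_of_le hst hcont hderiv
      (hintall s t (hsubIcc ⟨le_refl _, hst⟩) (hsubIcc ⟨hst, le_refl _⟩))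
  have hpIcc : ∀ j ≤ N + 1, p j ∈ Icc (0:ℝ) H := by
    intro j hj
    rcases Nat.lt_or_ge j (N+1) with hj' | hj'
    · have hjN : j ≤ N := Nat.lt_succ_iff.mp hj'
      exact hls j hjN ⟨le_refl _, (hpmono j hjN).le⟩
    · have : j = N + 1 := le_antisymm hj hj'
      rw [this, hpN]
      exact ⟨hH.le, le_refl _⟩
  -- chain over partition points
  have hpartial : ∀ j ≤ N + 1, (∫ y in (0:ℝ)..(p j), h y) = g (p j) - g 0 := by
    intro j hj
    induction j with
    | zero => rw [hp0]; simp
    | succ k ih =>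
      have hkN : k ≤ N := Nat.lt_succ_iff.mp (Nat.lt_of_lt_of_le (Nat.lt_succ_self k) hj)
      have ihv := ih (le_trans (Nat.le_succ k) hj)
      have hadd : (∫ y in (0:ℝ)..(p k), h y) + (∫ y in (p k)..(p (k+1)), h y)
          = ∫ y in (0:ℝ)..(p (k+1)), h y :=
        intervalIntegral.integral_add_adjacent_intervals
          (hintall 0 (p k) ⟨le_refl _, hH.le⟩ (hpIcc k (le_trans (Nat.le_succ k) hj)))
          (hintall (p k) (p (k+1)) (hpIcc k (le_trans (Nat.le_succ k) hj)) (hpIcc (k+1) hj))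
      have hstep := step k hkN (p k) (p (k+1)) (le_refl _) (hpmono k hkN).le (le_refl _)
      rw [← hadd, ihv, hstep]
      ring
  -- global zero-based
  have hzero : ∀ t ∈ Icc (0:ℝ) H, (∫ y in (0:ℝ)..t, h y) = g t - g 0 := by
    intro t ht
    obtain ⟨j, hj, htj⟩ := hcover t ht
    have hadd : (∫ y in (0:ℝ)..(p j), h y) + (∫ y in (p j)..t, h y)
        = ∫ y in (0:ℝ)..t, h y :=
      intervalIntegral.integral_add_adjacent_intervals
        (hintall 0 (p j) ⟨le_refl _, hH.le⟩ (hpIcc j (le_trans hj (Nat.le_succ N))))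
        (hintall (p j) t (hpIcc j (le_trans hj (Nat.le_succ N))) ht)
    have hstep := step j hj (p j) t (le_refl _) htj.1 htj.2
    rw [← hadd, hpartial j (le_trans hj (Nat.le_succ N)), hstep]
    ring
  intro s hs t ht hst
  have hadd : (∫ y in (0:ℝ)..s, h y) + (∫ y in s..t, h y) = ∫ y in (0:ℝ)..t, h y :=
    intervalIntegral.integral_add_adjacent_intervals
      (hintall 0 s ⟨le_refl _, hH.le⟩ hs) (hintall s t hs ht)
  have h1 := hzero s hs
  have h2 := hzero t ht
  have := hadd
  rw [h1, h2] at this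
  simp only [hg] at this ⊢
  linarith
end


theorem stmt12
    (ε H c_m c_M μ₁ V : ℝ)
    (hε : 0 < ε) (hH : 0 < H) (hcm : 0 < c_m) (hcmM : c_m ≤ c_M)
    (hμ₁ : 0 < μ₁) (hV : 0 < V) :
    (∃ δ : ℝ, 0 < δ ∧
      ∀ (N : ℕ) (p v : ℕ → ℝ) (c u u' : ℝ → ℝ) (μ lam : ℝ),
        PiecewiseConstCoeff H c_m c_M V N p v c →
        μ₁ ≤ μ → (c_M + ε) * μ ^ 2 ≤ lam →
        ReducedEigenfunction H c μ lam u u' →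
        (∫ y in (0:ℝ)..H, (u y) ^ 2 / c y) = 1 →
        ∀ y ∈ Set.Icc (0:ℝ) H, δ ^ 2 ≤ (u y) ^ 2 + (u' y) ^ 2)
    ∧
    (∀ a b : ℝ, 0 ≤ a → a < b → b ≤ H →
      ∃ d : ℝ, 0 < d ∧ ∃ lam₀ : ℝ, 0 < lam₀ ∧
        ∀ (N : ℕ) (p v : ℕ → ℝ) (c u u' : ℝ → ℝ) (μ lam : ℝ),
          PiecewiseConstCoeff H c_m c_M V N p v c →
          μ₁ ≤ μ → (c_M + ε) * μ ^ 2 ≤ lam → lam₀ < lam →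
          ReducedEigenfunction H c μ lam u u' →
          (∫ y in (0:ℝ)..H, (u y) ^ 2 / c y) = 1 →
          d ≤ ∫ y in a..b, (u y) ^ 2 / c y) := by
  have hcM : 0 < c_M := lt_of_lt_of_le hcm hcmM
  set E : ℝ := Real.exp (c_M*(c_M+ε)/(ε*c_m^2)*V) with hEdef
  have hE1 : (1:ℝ) ≤ E := Real.one_le_exp (by positivity)
  have hE0 : (0:ℝ) < E := lt_of_lt_of_le one_pos hE1
  set B₀ : ℝ := c_m / (H * E ^ 2) with hB₀def
  have hB₀0 : 0 < B₀ := by positivity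
  constructor
  · -- Part 1
    have hm0 : (0:ℝ) < min 1 (ε*μ₁^2/c_M) := lt_min one_pos (by positivity)
    refine ⟨Real.sqrt (min 1 (ε*μ₁^2/c_M) * B₀), Real.sqrt_pos.mpr (by positivity), ?_⟩
    intro N p v c u u' μ lam hPC hμ hlam hE hnorm y hy
    obtain ⟨F, hFid, hcross, hlow, hFnn, hder⟩ :=
      core hε hH hcm hcmM hμ₁ hV hPC hμ hlam hE hnorm
    obtain ⟨hN1, hp0, hpN, hpmono, hv, hvar, hcmeas, hcb, hlayer⟩ := hPC
    obtain ⟨j, hj, hyj⟩ := layer_cover hp0 hpN hpmono hy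
    have hid := hFid j hj y hyj
    have hqfj := q_facts hε hcm hcmM hμ₁ hμ hlam (hv j hj).1 (hv j hj).2
    have hq0 : 0 < lam / v j - μ ^ 2 := lt_of_lt_of_le (by positivity) hqfj.2.2.2
    have hqlo : ε*μ₁^2/c_M ≤ lam / v j - μ ^ 2 := hqfj.2.2.2
    rw [Real.sq_sqrt (by positivity)]
    have hm1 : min 1 (ε*μ₁^2/c_M) ≤ 1 := min_le_left _ _
    have hmq : min 1 (ε*μ₁^2/c_M) ≤ lam / v j - μ ^ 2 := le_trans (min_le_right _ _) hqlo
    have e1 : (lam / v j - μ ^ 2) * (u' y ^ 2 / (lam / v j - μ ^ 2)) = u' y ^ 2 :=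
      mul_div_cancel₀ _ hq0.ne'
    have h2 : min 1 (ε*μ₁^2/c_M) * B₀ ≤ min 1 (ε*μ₁^2/c_M) * F j :=
      mul_le_mul_of_nonneg_left (hlow j hj) hm0.le
    have h3 : min 1 (ε*μ₁^2/c_M) * F j ≤ u y ^ 2 + u' y ^ 2 := by
      nlinarith [mul_le_mul_of_nonneg_right hmq
          (div_nonneg (sq_nonneg (u' y)) hq0.le),
        mul_le_mul_of_nonneg_right hm1 (sq_nonneg (u y))]
    linarith
  · -- Part 2
    intro a b ha hab hbH
    have hba : 0 < b - a := sub_pos.mpr hab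
    set c₀ : ℝ := ε / (c_M * (c_M + ε)) with hc₀def
    have hc₀0 : 0 < c₀ := by positivity
    refine ⟨B₀ * c₀ * (b-a) / 4, by positivity,
      max 1 ((4*E^2/(c₀*(b-a)*Real.sqrt c_m))^2), lt_of_lt_of_le one_pos (le_max_left _ _), ?_⟩
    intro N p v c u u' μ lam hPC hμ hlam hlamgt hE hnorm
    obtain ⟨F, hFid, hcross, hlow, hFnn, hder⟩ :=
      core hε hH hcm hcmM hμ₁ hV hPC hμ hlam hE hnorm
    obtain ⟨hN1, hp0, hpN, hpmono, hv, hvar, hcmeas, hcb, hlayer⟩ := hPC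
    obtain ⟨hu, hu'c, hueq, hnz, hu0, huH⟩ := hE
    have hucont : ContinuousOn u (Icc 0 H) := fun z hz => (hu z hz).continuousWithinAt
    have hlam0 : 0 < lam := (q_facts hε hcm hcmM hμ₁ hμ hlam (le_refl c_m) hcmM).1
    have hqf : ∀ j ≤ N, lam * ε / (c_M * (c_M + ε)) ≤ lam / v j - μ ^ 2 ∧
        lam / v j - μ ^ 2 ≤ lam / c_m ∧ ε * μ₁ ^ 2 / c_M ≤ lam / v j - μ ^ 2 :=
      fun j hj => ⟨(q_facts hε hcm hcmM hμ₁ hμ hlam (hv j hj).1 (hv j hj).2).2.1,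
        (q_facts hε hcm hcmM hμ₁ hμ hlam (hv j hj).1 (hv j hj).2).2.2.1,
        (q_facts hε hcm hcmM hμ₁ hμ hlam (hv j hj).1 (hv j hj).2).2.2.2⟩
    have hq0 : ∀ j ≤ N, 0 < lam / v j - μ ^ 2 := fun j hj =>
      lt_of_lt_of_le (by positivity) (hqf j hj).1
    have hpm : ∀ i j, i ≤ j → j ≤ N + 1 → p i ≤ p j := p_mono hpmono
    have hpIcc : ∀ j ≤ N + 1, p j ∈ Icc (0:ℝ) H := by
      intro j hj
      constructor
      · rw [← hp0]; exact hpm 0 j (Nat.zero_le j) hj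
      · rw [← hpN]; exact hpm j (N+1) hj (le_refl _)
    have hls : ∀ j ≤ N, Icc (p j) (p (j+1)) ⊆ Icc (0:ℝ) H := by
      intro j hj x hx
      exact ⟨le_trans (hpIcc j (le_trans hj (Nat.le_succ N))).1 hx.1,
        le_trans hx.2 (hpIcc (j+1) (Nat.succ_le_succ hj)).2⟩
    have hcover : ∀ y ∈ Icc (0:ℝ) H, ∃ j ≤ N, y ∈ Icc (p j) (p (j+1)) :=
      fun y hy => layer_cover hp0 hpN hpmono hy
    obtain ⟨Cu, hCu⟩ : ∃ Cu, ∀ t ∈ Icc (0:ℝ) H, |u t| ≤ Cu := by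
      obtain ⟨Cu, hCu⟩ := (isCompact_Icc).exists_bound_of_continuousOn hucont
      exact ⟨Cu, fun t ht => by simpa using hCu t ht⟩
    have hCu0 : 0 ≤ Cu := le_trans (abs_nonneg _) (hCu 0 ⟨le_refl _, hH.le⟩)
    -- B := min of F
    obtain ⟨jm, hjmmem, hjmmin⟩ := Finset.exists_min_image (Finset.range (N+1)) F
      ⟨0, Finset.mem_range.mpr (Nat.succ_pos N)⟩
    have hjmN : jm ≤ N := Nat.lt_succ_iff.mp (Finset.mem_range.mp hjmmem)
    set B : ℝ := F jm with hBdef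
    have hBle : ∀ j ≤ N, B ≤ F j := fun j hj =>
      hjmmin j (Finset.mem_range.mpr (Nat.lt_succ_iff.mpr hj))
    have hBup : ∀ j ≤ N, F j ≤ E^2 * B := fun j hj => hcross j hj jm hjmN
    have hB0 : B₀ ≤ B := hlow jm hjmN
    have hBnn : 0 ≤ B := le_trans hB₀0.le hB0
    have haI : a ∈ Icc (0:ℝ) H := ⟨ha, le_trans hab.le hbH⟩
    have hbI : b ∈ Icc (0:ℝ) H := ⟨le_trans ha hab.le, hbH⟩
    -- integrability of u^2/c
    have hI0H : IntervalIntegrable (fun y => u y ^ 2 / c y) volume 0 H := by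
      rw [intervalIntegrable_iff_integrableOn_Ioc_of_le hH.le]
      have hmeas : AEStronglyMeasurable (fun y => u y ^ 2 / c y)
          (volume.restrict (Ioc 0 H)) := by
        have h1 : AEStronglyMeasurable (fun y => u y ^ 2) (volume.restrict (Ioc 0 H)) :=
          ((hucont.mono Ioc_subset_Icc_self).pow 2).aestronglyMeasurable measurableSet_Ioc
        have h2 : AEStronglyMeasurable (fun y => (c y)⁻¹) (volume.restrict (Ioc 0 H)) :=
          (hcmeas.inv).aestronglyMeasurable
        simpa [div_eq_mul_inv, Pi.mul_def] using h1.mul h2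
      refine Integrable.mono' (integrable_const (Cu ^ 2 / c_m)) hmeas ?_
      rw [ae_restrict_iff' measurableSet_Ioc]
      filter_upwards with t ht
      have htI : t ∈ Icc (0:ℝ) H := Ioc_subset_Icc_self ht
      have hct : 0 < c t := lt_of_lt_of_le hcm (hcb t htI).1
      have h1 : u t ^ 2 ≤ Cu ^ 2 := by
        have := hCu t htI
        nlinarith [abs_nonneg (u t), sq_abs (u t)]
      rw [Real.norm_eq_abs, abs_of_nonneg (div_nonneg (sq_nonneg _) hct.le)]
      calc u t ^ 2 / c t ≤ Cu ^ 2 / c t := by gcongr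
        _ ≤ Cu ^ 2 / c_m := by gcongr; exact (hcb t htI).1
    have hIab : IntervalIntegrable (fun y => u y ^ 2 / c y) volume a b := by
      apply hI0H.mono_set
      rw [uIcc_of_le hH.le]
      exact uIcc_subset_Icc haI hbI
    -- integrability of h
    have hintall : ∀ s t, s ∈ Icc (0:ℝ) H → t ∈ Icc (0:ℝ) H →
        IntervalIntegrable (fun y => u' y ^ 2 - (lam / c y - μ ^ 2) * u y ^ 2)
          volume s t := by
      have base : IntervalIntegrable (fun y => u' y ^ 2 - (lam / c y - μ ^ 2) * u y ^ 2)
          volume 0 H := by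
        apply IntervalIntegrable.sub
        · apply ContinuousOn.intervalIntegrable
          rw [uIcc_of_le hH.le]
          exact hu'c.pow 2
        · rw [intervalIntegrable_iff_integrableOn_Ioc_of_le hH.le]
          have hmeas : AEStronglyMeasurable (fun t => (lam / c t - μ ^ 2) * u t ^ 2)
              (volume.restrict (Ioc 0 H)) := by
            apply AEStronglyMeasurable.mul
            · exact ((measurable_const.div hcmeas).sub measurable_const).aestronglyMeasurable
            · exact ((hucont.mono Ioc_subset_Icc_self).pow 2).aestronglyMeasurable
                measurableSet_Ioc
          refine Integrable.mono' (integrable_const ((lam / c_m + μ ^ 2) * Cu ^ 2)) hmeas ?_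
          rw [ae_restrict_iff' measurableSet_Ioc]
          filter_upwards with t ht
          have htI : t ∈ Icc (0:ℝ) H := Ioc_subset_Icc_self ht
          have hc1 := (hcb t htI).1
          have hct : 0 < c t := lt_of_lt_of_le hcm hc1
          have h1 : |lam / c t - μ ^ 2| ≤ lam / c_m + μ ^ 2 := by
            rw [abs_le]
            constructor
            · have : 0 ≤ lam / c t := by positivity
              nlinarith [div_nonneg hlam0.le hcm.le]
            · have : lam / c t ≤ lam / c_m := div_le_div_of_nonneg_left hlam0.le hcm hc1
              nlinarith [sq_nonneg μ]
          have h2 : u t ^ 2 ≤ Cu ^ 2 := by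
            have := hCu t htI
            nlinarith [abs_nonneg (u t), sq_abs (u t)]
          calc ‖(lam / c t - μ ^ 2) * u t ^ 2‖ = |lam / c t - μ ^ 2| * |u t ^ 2| := abs_mul _ _
            _ ≤ (lam / c_m + μ ^ 2) * Cu ^ 2 := by
                apply mul_le_mul h1 _ (abs_nonneg _) _
                · rw [abs_of_nonneg (sq_nonneg _)]; exact h2
                · positivity
      intro s t hs ht
      apply base.mono_set
      rw [uIcc_of_le hH.le]
      exact uIcc_subset_Icc hs ht
    -- FTC
    have hftc := ftc_aux hH hcm hlam0 hp0 hpN hpmono hls hlayer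
      (fun j => rfl) hcmeas hcb hucont hu'c hder hintall hcover a haI b hbI hab.le
    -- pointwise a.e. lower bound
    have hSfin : Set.Finite (p '' (Iic (N+1))) := ((Set.finite_Iic (N+1)).image p)
    have haeS : ∀ᵐ y ∂volume, y ∉ p '' (Iic (N+1)) := by
      have hz : volume (p '' (Iic (N+1))) = 0 := hSfin.measure_zero volume
      exact measure_eq_zero_iff_ae_notMem.mp hz
    have hptwise : ∀ᵐ y ∂(volume.restrict (Icc a b)),
        lam * c₀ * B - 2 * lam * (u y ^ 2 / c y)
          ≤ u' y ^ 2 - (lam / c y - μ ^ 2) * u y ^ 2 := by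
      filter_upwards [ae_restrict_of_ae haeS, ae_restrict_mem measurableSet_Icc]
        with y hyS hyab
      have hyI : y ∈ Icc (0:ℝ) H := ⟨le_trans ha hyab.1, le_trans hyab.2 hbH⟩
      obtain ⟨j, hj, hyj⟩ := hcover y hyI
      have hy1 : y ≠ p j := fun h => hyS ⟨j, le_trans hj (Nat.le_succ N), h.symm⟩
      have hy2 : y ≠ p (j+1) := fun h => hyS ⟨j+1, Nat.succ_le_succ hj, h.symm⟩
      have hyIoo : y ∈ Ioo (p j) (p (j+1)) :=
        ⟨lt_of_le_of_ne hyj.1 (Ne.symm hy1), lt_of_le_of_ne hyj.2 hy2⟩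
      have hcy : c y = v j := hlayer j hj y hyIoo
      have hid := hFid j hj y hyj
      have hqj0 := hq0 j hj
      have hvj0 : 0 < v j := lt_of_lt_of_le hcm (hv j hj).1
      have hu'sq : u' y ^ 2 = (lam / v j - μ ^ 2) * (F j - u y ^ 2) := by
        have h9 : F j - u y ^ 2 = u' y ^ 2 / (lam / v j - μ ^ 2) := by linarith [hid]
        rw [h9, mul_div_cancel₀ _ hqj0.ne']
      have hqlo : lam * c₀ ≤ lam / v j - μ ^ 2 := by
        have := (hqf j hj).1
        rw [hc₀def]
        calc lam * (ε / (c_M * (c_M + ε))) = lam * ε / (c_M * (c_M + ε)) := by ring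
          _ ≤ lam / v j - μ ^ 2 := this
      have hqB : lam * c₀ * B ≤ (lam / v j - μ ^ 2) * F j := by
        calc lam * c₀ * B ≤ (lam / v j - μ ^ 2) * B :=
              mul_le_mul_of_nonneg_right hqlo hBnn
          _ ≤ (lam / v j - μ ^ 2) * F j :=
              mul_le_mul_of_nonneg_left (hBle j hj) hqj0.le
      have hqu : (lam / v j - μ ^ 2) * u y ^ 2 ≤ lam * (u y ^ 2 / c y) := by
        rw [hcy]
        have h1 : lam / v j - μ ^ 2 ≤ lam / v j := by nlinarith [sq_nonneg μ]
        calc (lam / v j - μ ^ 2) * u y ^ 2 ≤ (lam / v j) * u y ^ 2 :=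
              mul_le_mul_of_nonneg_right h1 (sq_nonneg _)
          _ = lam * (u y ^ 2 / v j) := by ring
      rw [hcy] at hqu
      rw [hcy, hu'sq]
      have hexp : (lam / v j - μ ^ 2) * (F j - u y ^ 2)
          - (lam / v j - μ ^ 2) * u y ^ 2
          = (lam / v j - μ ^ 2) * F j - 2 * ((lam / v j - μ ^ 2) * u y ^ 2) := by ring
      linarith [hqB, hqu, hexp.le, hexp.ge]
    -- integral comparison
    have hlhsint : IntervalIntegrable
        (fun y => lam * c₀ * B - 2 * lam * (u y ^ 2 / c y)) volume a b :=
      (intervalIntegrable_const).sub (hIab.const_mul (2 * lam))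
    have hcmp := intervalIntegral.integral_mono_ae_restrict hab.le hlhsint
      (hintall a b haI hbI) hptwise
    have hlhs : (∫ y in a..b, (lam * c₀ * B - 2 * lam * (u y ^ 2 / c y)))
        = lam * c₀ * B * (b - a) - 2 * lam * ∫ y in a..b, u y ^ 2 / c y := by
      rw [intervalIntegral.integral_sub (intervalIntegrable_const) (hIab.const_mul (2 * lam)),
        intervalIntegral.integral_const, intervalIntegral.integral_const_mul]
      simp [smul_eq_mul]
      ring
    -- boundary bound
    have hbound : ∀ y ∈ Icc (0:ℝ) H, |u y * u' y| ≤ E^2 * B * Real.sqrt (lam / c_m) := by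
      intro y hy
      obtain ⟨j, hj, hyj⟩ := hcover y hy
      have hid := hFid j hj y hyj
      have hqj0 := hq0 j hj
      have hFjnn := hFnn j hj
      have hu2 : u y ^ 2 ≤ F j := by
        have h2 : 0 ≤ u' y ^ 2 / (lam / v j - μ ^ 2) := div_nonneg (sq_nonneg _) hqj0.le
        linarith
      have hu'2 : u' y ^ 2 ≤ (lam / c_m) * F j := by
        have h3 : u' y ^ 2 = (lam / v j - μ ^ 2) * (F j - u y ^ 2) := by
          have h9 : F j - u y ^ 2 = u' y ^ 2 / (lam / v j - μ ^ 2) := by linarith [hid]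
          rw [h9, mul_div_cancel₀ _ hqj0.ne']
        rw [h3]
        have h4 : (lam / v j - μ ^ 2) ≤ lam / c_m := (hqf j hj).2.1
        have h5 : F j - u y ^ 2 ≤ F j := by nlinarith [sq_nonneg (u y)]
        have hnn : 0 ≤ F j - u y ^ 2 := by
          have h12 : 0 ≤ (lam / v j - μ ^ 2) * (F j - u y ^ 2) := h3 ▸ sq_nonneg (u' y)
          exact (mul_nonneg_iff_of_pos_left hqj0).mp h12
        calc (lam / v j - μ ^ 2) * (F j - u y ^ 2) ≤ (lam / c_m) * (F j - u y ^ 2) :=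
              mul_le_mul_of_nonneg_right h4 hnn
          _ ≤ (lam / c_m) * F j := by
              apply mul_le_mul_of_nonneg_left h5 (by positivity)
      have hsq : (u y * u' y) ^ 2 ≤ (F j * Real.sqrt (lam / c_m)) ^ 2 := by
        have e2 : (F j * Real.sqrt (lam / c_m)) ^ 2 = (lam / c_m) * F j ^ 2 := by
          rw [mul_pow, Real.sq_sqrt (by positivity)]
          ring
        rw [e2, mul_pow]
        have h10 := mul_le_mul hu2 hu'2 (sq_nonneg _) hFjnn
        linarith [h10]
      have habs : |u y * u' y| ≤ F j * Real.sqrt (lam / c_m) := by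
        have h6 : 0 ≤ F j * Real.sqrt (lam / c_m) := by positivity
        have h11 := Real.sqrt_le_sqrt hsq
        rwa [Real.sqrt_sq_eq_abs, Real.sqrt_sq h6] at h11
      calc |u y * u' y| ≤ F j * Real.sqrt (lam / c_m) := habs
        _ ≤ (E^2 * B) * Real.sqrt (lam / c_m) :=
            mul_le_mul_of_nonneg_right (hBup j hj) (Real.sqrt_nonneg _)
        _ = E^2 * B * Real.sqrt (lam / c_m) := by ring
    have hΔ : u b * u' b - u a * u' a ≤ 2 * (E^2 * B * Real.sqrt (lam / c_m)) := by
      have h1 := hbound a haI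
      have h2 := hbound b hbI
      have h3 := le_abs_self (u b * u' b)
      have h4 := neg_abs_le (u a * u' a)
      linarith
    -- lambda largeness
    have hs0 : 0 < Real.sqrt lam := Real.sqrt_pos.mpr hlam0
    have hscm : 0 < Real.sqrt c_m := Real.sqrt_pos.mpr hcm
    have hsgt : 4*E^2/(c₀*(b-a)*Real.sqrt c_m) ≤ Real.sqrt lam := by
      have h1 : ((4*E^2/(c₀*(b-a)*Real.sqrt c_m))^2) ≤ lam :=
        le_trans (le_max_right 1 _) hlamgt.le
      calc 4*E^2/(c₀*(b-a)*Real.sqrt c_m)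
          = Real.sqrt ((4*E^2/(c₀*(b-a)*Real.sqrt c_m))^2) :=
            (Real.sqrt_sq (by positivity)).symm
        _ ≤ Real.sqrt lam := Real.sqrt_le_sqrt h1
    have hkey : 2 * (E^2 * Real.sqrt (lam / c_m)) ≤ lam * c₀ * (b - a) / 2 := by
      have hls2 : Real.sqrt (lam / c_m) = Real.sqrt lam / Real.sqrt c_m :=
        Real.sqrt_div hlam0.le c_m
      rw [hls2]
      have h4 : 4*E^2 ≤ Real.sqrt lam * (c₀*(b-a)*Real.sqrt c_m) :=
        (div_le_iff₀ (by positivity)).mp hsgt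
      have hl : Real.sqrt lam * Real.sqrt lam = lam := Real.mul_self_sqrt hlam0.le
      have e3 : 2 * (E^2 * (Real.sqrt lam / Real.sqrt c_m))
          = (2 * E^2 * Real.sqrt lam) / Real.sqrt c_m := by ring
      rw [e3, div_le_iff₀ hscm]
      have h5 : 4 * E^2 * Real.sqrt lam ≤ lam * (c₀ * (b-a) * Real.sqrt c_m) := by
        calc 4 * E^2 * Real.sqrt lam
            ≤ (Real.sqrt lam * (c₀*(b-a)*Real.sqrt c_m)) * Real.sqrt lam :=
              mul_le_mul_of_nonneg_right h4 hs0.le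
          _ = (Real.sqrt lam * Real.sqrt lam) * (c₀*(b-a)*Real.sqrt c_m) := by ring
          _ = lam * (c₀ * (b-a) * Real.sqrt c_m) := by rw [hl]
      linarith
    -- combine
    set I : ℝ := ∫ y in a..b, u y ^ 2 / c y with hIdef
    have hmain : lam * c₀ * B * (b - a) - 2 * lam * I ≤ 2 * (E^2 * B * Real.sqrt (lam / c_m)) := by
      calc lam * c₀ * B * (b - a) - 2 * lam * I
          = ∫ y in a..b, (lam * c₀ * B - 2 * lam * (u y ^ 2 / c y)) := hlhs.symm
        _ ≤ ∫ y in a..b, (u' y ^ 2 - (lam / c y - μ ^ 2) * u y ^ 2) := hcmp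
        _ = u b * u' b - u a * u' a := hftc
        _ ≤ 2 * (E^2 * B * Real.sqrt (lam / c_m)) := hΔ
    have hIfin : c₀ * B * (b - a) / 4 ≤ I := by
      have h7 : 2 * (E^2 * B * Real.sqrt (lam / c_m))
          ≤ (lam * c₀ * (b - a) / 2) * B := by
        have := mul_le_mul_of_nonneg_right hkey hBnn
        calc 2 * (E^2 * B * Real.sqrt (lam / c_m))
            = (2 * (E^2 * Real.sqrt (lam / c_m))) * B := by ring
          _ ≤ (lam * c₀ * (b - a) / 2) * B := this
      have h8 : lam * (c₀ * B * (b - a) / 2) ≤ lam * (2 * I) := by linarith [hmain, h7]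
      have h9 := le_of_mul_le_mul_left h8 hlam0
      linarith
    calc B₀ * c₀ * (b-a) / 4 ≤ c₀ * B * (b - a) / 4 := by
          have h12 := mul_le_mul_of_nonneg_right
            (mul_le_mul_of_nonneg_left hB0 hc₀0.le) hba.le
          linarith [h12]
      _ ≤ I := hIfin
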